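/- Let W be a well-generated irreducible unitary reflection group and ν any ℤ-valued multiplicity on 𝒜 = 𝒜(W). For each H choose a_H ∈ ℤ and set μ(H) = a_H·e_H + 1; if μ − ω < ν ≤ μ (pointwise), then D(𝒜, ν)^W = D(𝒜, μ)^W. -/

import Mathlib

open MvPolynomial

set_option synthInstance.maxHeartbeats 1000000
set_option maxHeartbeats 1000000

noncomputable section

/-- The polynomial ring `S = ℂ[x_1, …, x_ℓ]`. -/
abbrev Spoly (ℓ : ℕ) := MvPolynomial (Fin ℓ) ℂ

/-- The field `F = ℂ(x_1, …, x_ℓ)` of rational functions. -/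
abbrev Frac (ℓ : ℕ) := FractionRing (Spoly ℓ)

/-- The canonical embedding `S → F`. -/
def toF {ℓ : ℕ} : Spoly ℓ →+* Frac ℓ := algebraMap _ _

/-- The linear form with coefficient vector `a`. -/
def lin {ℓ : ℕ} (a : Fin ℓ → ℂ) : Spoly ℓ := ∑ i, C (a i) * X i

/-- Orthogonality of coefficient vectors with respect to the (standard) Hermitian form. -/
def orth {ℓ : ℕ} (a b : Fin ℓ → ℂ) : Prop := ∑ i, (starRingEnd ℂ) (a i) * b i = 0

/-- The localization `S_{⟨α⟩}` of `S` at the prime ideal `⟨α⟩`, as a subset of `F`. -/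
def locAt {ℓ : ℕ} (α : Spoly ℓ) : Set (Frac ℓ) :=
  {x | ∃ f g : Spoly ℓ, g ∉ Ideal.span ({α} : Set (Spoly ℓ)) ∧ toF g * x = toF f}

/-- The ring `S' = S[Q_𝒜^{-1}]`, as a subset of `F`. -/
def Sloc {ℓ : ℕ} (A : Finset (Fin ℓ → ℂ)) : Set (Frac ℓ) :=
  {x | ∃ (f : Spoly ℓ) (n : ℕ), toF (∏ a ∈ A, lin a) ^ n * x = toF f}

/-- The module `D(𝒜, -∞)` of logarithmic vector fields on the arrangement with
defining linear forms `lin a` for `a ∈ A`: derivations of `S' = S[Q_𝒜^{-1}]` with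
`θ(β) ∈ S_{⟨α_H⟩}` for all `β` orthogonal to `α_H`. -/
def Dinf {ℓ : ℕ} (A : Finset (Fin ℓ → ℂ)) (θ : Derivation ℂ (Frac ℓ) (Frac ℓ)) : Prop :=
  (∀ i, θ (toF (X i)) ∈ Sloc A) ∧
  ∀ a ∈ A, ∀ b : Fin ℓ → ℂ, orth a b → θ (toF (lin b)) ∈ locAt (lin a)

/-- The module `D(𝒜, ν)` of `(𝒜,ν)`-derivations for a ℤ-valued multiplicity `ν`:
logarithmic vector fields with `θ(α_H) ∈ α_H^{ν(H)}·S_{⟨α_H⟩}` for every `H ∈ 𝒜`. -/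
def Dmult {ℓ : ℕ} (A : Finset (Fin ℓ → ℂ)) (ν : (Fin ℓ → ℂ) → ℤ)
    (θ : Derivation ℂ (Frac ℓ) (Frac ℓ)) : Prop :=
  Dinf A θ ∧ ∀ a ∈ A, ∃ y ∈ locAt (lin a), θ (toF (lin a)) = toF (lin a) ^ ν a * y

/-- `A` is a central arrangement: all linear forms nonzero and pairwise
non-proportional (distinct hyperplanes). -/
def IsArrangement {ℓ : ℕ} (A : Finset (Fin ℓ → ℂ)) : Prop :=
  (∀ a ∈ A, a ≠ 0) ∧ ∀ a ∈ A, ∀ b ∈ A, (∃ c : ℂ, b = c • a) → a = b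

/-- `θ` is a polynomial derivation, i.e. `θ ∈ Der(S)`. -/
def PolyDer {ℓ : ℕ} (θ : Derivation ℂ (Frac ℓ) (Frac ℓ)) : Prop :=
  ∀ i, ∃ f : Spoly ℓ, θ (toF (X i)) = toF f

/-- `θ_1, …, θ_ℓ` is an `S`-basis of `D(𝒜, ν)`. -/
def IsBasisOfD {ℓ : ℕ} (A : Finset (Fin ℓ → ℂ)) (ν : (Fin ℓ → ℂ) → ℤ)
    (θs : Fin ℓ → Derivation ℂ (Frac ℓ) (Frac ℓ)) : Prop :=
  (∀ i, Dmult A ν (θs i)) ∧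
  ∀ θ, Dmult A ν θ → ∃! c : Fin ℓ → Spoly ℓ, θ = ∑ i, toF (c i) • θs i

/-- `θ` is homogeneous of polynomial degree `d`: `θ = Σ (f_i/g_i) ∂_{x_i}` with
all `f_i` homogeneous of degree `p`, all `g_i ≠ 0` homogeneous of degree `q`, and `d = p - q`. -/
def IsHomogDer {ℓ : ℕ} (θ : Derivation ℂ (Frac ℓ) (Frac ℓ)) (d : ℤ) : Prop :=
  ∃ (p q : ℕ) (f g : Fin ℓ → Spoly ℓ), d = (p : ℤ) - (q : ℤ) ∧
    ∀ i, f i ∈ homogeneousSubmodule (Fin ℓ) ℂ p ∧ g i ∈ homogeneousSubmodule (Fin ℓ) ℂ q ∧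
      g i ≠ 0 ∧ toF (g i) * θ (toF (X i)) = toF (f i)

/-- The defining rational function `Q(𝒜, ν) = ∏_H α_H^{ν(H)}`. -/
def Qrat {ℓ : ℕ} (A : Finset (Fin ℓ → ℂ)) (ν : (Fin ℓ → ℂ) → ℤ) : Frac ℓ :=
  ∏ a ∈ A, toF (lin a) ^ ν a

/-- The group of linear automorphisms of `V = ℂ^ℓ`. -/
abbrev GLV (ℓ : ℕ) := (Fin ℓ → ℂ) ≃ₗ[ℂ] (Fin ℓ → ℂ)

/-- The hyperplane `ker` of the linear form with coefficient vector `a`. -/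
def hypl {ℓ : ℕ} (a : Fin ℓ → ℂ) : Set (Fin ℓ → ℂ) := {v | ∑ i, a i * v i = 0}

/-- `w` is a (unitary) reflection: `w ≠ 1` and its fixed space is a hyperplane. -/
def IsReflection {ℓ : ℕ} (w : GLV ℓ) : Prop :=
  w ≠ 1 ∧ ∃ a : Fin ℓ → ℂ, a ≠ 0 ∧ {v | w v = v} = hypl a

/-- The algebra automorphism of `S = Sym(V^*)` induced by a linear automorphism of `V`
(substitution `p ↦ p ∘ s`). -/
def induced {ℓ : ℕ} (s : GLV ℓ) : Spoly ℓ →ₐ[ℂ] Spoly ℓ :=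
  MvPolynomial.aeval (fun i => ∑ j, C (s (Pi.single j 1) i) * X j)

/-- The order `e_H` of the pointwise stabilizer in `G` of the hyperplane with
coefficient vector `a`. -/
def hypOrder {ℓ : ℕ} (G : Subgroup (GLV ℓ)) (a : Fin ℓ → ℂ) : ℕ :=
  Nat.card {w : G | ∀ v ∈ hypl a, (w : GLV ℓ) v = v}

/-- `A` is the reflection arrangement of the group `G`. -/
def IsReflArrOf {ℓ : ℕ} (G : Subgroup (GLV ℓ)) (A : Finset (Fin ℓ → ℂ)) : Prop :=
  IsArrangement A ∧
  (∀ w ∈ G, IsReflection w → ∃ a ∈ A, {v | w v = v} = hypl a) ∧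
  (∀ a ∈ A, ∃ w ∈ G, IsReflection w ∧ {v | w v = v} = hypl a)

/-- `G` is generated by `ℓ` reflections (well-generated). -/
def WellGen {ℓ : ℕ} (G : Subgroup (GLV ℓ)) : Prop :=
  ∃ s : Finset (GLV ℓ), s.card = ℓ ∧ (∀ w ∈ s, w ∈ G ∧ IsReflection w) ∧
    Subgroup.closure (s : Set (GLV ℓ)) = G

/-- `G` acts irreducibly on `V`. -/
def IsIrred {ℓ : ℕ} (G : Subgroup (GLV ℓ)) : Prop :=
  ∀ U : Submodule ℂ (Fin ℓ → ℂ), (∀ w ∈ G, ∀ v ∈ U, (w : GLV ℓ) v ∈ U) → U = ⊥ ∨ U = ⊤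

/-- `θ` is a `G`-invariant derivation: `θ` commutes with the induced action of
every `w ∈ G` on rational functions (expressed via representatives in `S`). -/
def Winvariant {ℓ : ℕ} (G : Subgroup (GLV ℓ)) (θ : Derivation ℂ (Frac ℓ) (Frac ℓ)) : Prop :=
  ∀ w ∈ G, ∀ p f g : Spoly ℓ, g ≠ 0 → toF g * θ (toF p) = toF f →
    toF (induced w g) * θ (toF (induced w p)) = toF (induced w f)

variable {ℓ : ℕ}

lemma toF_injective : Function.Injective (toF (ℓ := ℓ)) :=
  IsFractionRing.injective (Spoly ℓ) (Frac ℓ)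

lemma toF_eq_zero {p : Spoly ℓ} : toF p = 0 ↔ p = 0 :=
  map_eq_zero_iff _ toF_injective

lemma eval_lin (a v : Fin ℓ → ℂ) : eval v (lin a) = ∑ i, a i * v i := by
  simp [lin]

lemma eval_lin_single (a : Fin ℓ → ℂ) (k : Fin ℓ) : eval (Pi.single k 1) (lin a) = a k := by
  rw [eval_lin]
  rw [Finset.sum_eq_single k]
  · simp
  · intro i _ hik; simp [Pi.single_apply, hik]
  · simp

lemma lin_inj {a b : Fin ℓ → ℂ} (h : lin a = lin b) : a = b := by
  funext k
  have := congrArg (eval (Pi.single k (1:ℂ))) h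
  rwa [eval_lin_single, eval_lin_single] at this

lemma lin_ne_zero {a : Fin ℓ → ℂ} (h : a ≠ 0) : lin a ≠ 0 := by
  intro hz
  apply h
  have : lin a = lin 0 := by rw [hz]; simp [lin]
  exact lin_inj this

lemma lin_smul (c : ℂ) (a : Fin ℓ → ℂ) : lin (c • a) = C c * lin a := by
  simp [lin, Finset.mul_sum, mul_assoc, C_mul]

lemma sum_single_eq (v : Fin ℓ → ℂ) : ∑ j, v j • (Pi.single j 1 : Fin ℓ → ℂ) = v := by
  funext i
  rw [Finset.sum_apply]
  rw [Finset.sum_eq_single i]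
  · simp
  · intro j _ hji; simp [Pi.single_apply, hji]
  · simp

lemma apply_eq_sum (s : GLV ℓ) (v : Fin ℓ → ℂ) (i : Fin ℓ) :
    s v i = ∑ j, v j * s (Pi.single j 1) i := by
  conv_lhs => rw [← sum_single_eq v]
  rw [map_sum]
  rw [Finset.sum_apply]
  simp [map_smul]

lemma induced_X (s : GLV ℓ) (i : Fin ℓ) :
    induced s (X i) = lin (fun j => s (Pi.single j 1) i) := by
  simp [induced, lin]

lemma induced_lin (s : GLV ℓ) (b : Fin ℓ → ℂ) :
    induced s (lin b) = lin (fun j => ∑ i, b i * s (Pi.single j 1) i) := by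
  simp only [lin, map_sum, map_mul, induced, aeval_C, aeval_X, algebraMap_eq,
    Finset.mul_sum]
  rw [Finset.sum_comm]
  refine Finset.sum_congr rfl fun j _ => ?_
  rw [Finset.sum_mul]
  exact Finset.sum_congr rfl fun i _ => (mul_assoc _ _ _).symm

lemma induced_comp (s t : GLV ℓ) (p : Spoly ℓ) :
    induced t (induced s p) = induced (t.trans s) p := by
  have : (induced t).comp (induced s) = induced (t.trans s) := by
    apply MvPolynomial.algHom_ext
    intro i
    rw [AlgHom.comp_apply, induced_X, induced_lin, induced_X]
    congr 1
    funext k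
    rw [LinearEquiv.trans_apply, apply_eq_sum s (t (Pi.single k 1)) i]
    exact Finset.sum_congr rfl fun j _ => mul_comm _ _
  exact congrArg (fun φ => φ p) this


lemma lin_single (i : Fin ℓ) : lin (Pi.single i 1 : Fin ℓ → ℂ) = X i := by
  unfold lin
  rw [Finset.sum_eq_single i]
  · simp
  · intro j _ hji; simp [Pi.single_apply, hji]
  · simp

lemma lin_sub (a b : Fin ℓ → ℂ) : lin (a - b) = lin a - lin b := by
  simp [lin, sub_mul, Finset.sum_sub_distrib]

lemma induced_one (p : Spoly ℓ) : induced (1 : GLV ℓ) p = p := by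
  have h : induced (1 : GLV ℓ) = AlgHom.id ℂ (Spoly ℓ) := by
    apply MvPolynomial.algHom_ext
    intro i
    rw [induced_X]
    have h2 : (fun j => ((1 : GLV ℓ) (Pi.single j 1 : Fin ℓ → ℂ)) i) = (Pi.single i 1 : Fin ℓ → ℂ) := by
      funext j
      simp [Pi.single_apply, eq_comm]
    rw [h2, lin_single]
    rfl
  rw [h]; rfl

lemma induced_mul (w w' : GLV ℓ) (p : Spoly ℓ) :
    induced (w * w') p = induced w' (induced w p) := by
  rw [induced_comp]
  rfl

lemma prime_lin {a : Fin ℓ → ℂ} (ha : a ≠ 0) : Prime (lin a) := by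
  obtain ⟨k, hk⟩ : ∃ k, a k ≠ 0 := by
    by_contra h'; push_neg at h'; exact ha (funext h')
  have hpos := k.pos
  obtain ⟨m, rfl⟩ : ∃ m, ℓ = m + 1 := ⟨ℓ - 1, by omega⟩
  have hX0 : Prime (X 0 : Spoly (m+1)) := by
    rw [← MulEquiv.prime_iff (MvPolynomial.finSuccEquiv ℂ m).toMulEquiv]
    simpa [MvPolynomial.finSuccEquiv_X_zero] using
      (Polynomial.prime_X : Prime (Polynomial.X (R := MvPolynomial (Fin m) ℂ)))
  have hXk : Prime (X k : Spoly (m+1)) := by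
    have h := (MulEquiv.prime_iff (renameEquiv ℂ (Equiv.swap (0 : Fin (m+1)) k)).toMulEquiv
      (p := (X 0 : Spoly (m+1)))).symm
    rw [h] at hX0
    simpa [Equiv.swap_apply_left] using hX0
  set E : Finset (Fin (m+1)) := Finset.univ.erase k with hE
  set Sm : Spoly (m+1) := ∑ j ∈ E, C (a j) * X j with hSm
  set uf : Fin (m+1) → Spoly (m+1) := fun i =>
    if i = k then C (a k)⁻¹ * (X k - Sm) else X i with huf
  set vf : Fin (m+1) → Spoly (m+1) := fun i => if i = k then lin a else X i with hvf
  have hufk : uf k = C (a k)⁻¹ * (X k - Sm) := by simp [huf]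
  have hvfk : vf k = lin a := by simp [hvf]
  have hufne : ∀ i, i ≠ k → uf i = X i := by intro i hi; simp [huf, hi]
  have hvfne : ∀ i, i ≠ k → vf i = X i := by intro i hi; simp [hvf, hi]
  have hlin : lin a = C (a k) * X k + Sm := by
    rw [lin, hSm, hE, ← Finset.add_sum_erase _ _ (Finset.mem_univ k)]
  have hCC : C (a k) * C (a k)⁻¹ = (1 : Spoly (m+1)) := by
    rw [← C_mul, mul_inv_cancel₀ hk, C_1]
  have hSu : aeval uf Sm = Sm := by
    rw [hSm, map_sum]
    refine Finset.sum_congr rfl fun j hj => ?_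
    rw [map_mul, aeval_C, aeval_X, hufne j (Finset.mem_erase.mp hj).1, algebraMap_eq]
  have hSv : aeval vf Sm = Sm := by
    rw [hSm, map_sum]
    refine Finset.sum_congr rfl fun j hj => ?_
    rw [map_mul, aeval_C, aeval_X, hvfne j (Finset.mem_erase.mp hj).1, algebraMap_eq]
  have hvu : (aeval vf).comp (aeval uf) = AlgHom.id ℂ (Spoly (m+1)) := by
    apply MvPolynomial.algHom_ext
    intro i
    rw [AlgHom.comp_apply, aeval_X, AlgHom.coe_id, id_eq]
    by_cases hik : i = k
    · subst hik
      rw [hufk, map_mul, map_sub, aeval_C, aeval_X, hSv, hvfk, algebraMap_eq, hlin,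
        add_sub_cancel_right, ← mul_assoc, ← C_mul, inv_mul_cancel₀ hk, C_1, one_mul]
    · rw [hufne i hik, aeval_X, hvfne i hik]
  have huv : (aeval uf).comp (aeval vf) = AlgHom.id ℂ (Spoly (m+1)) := by
    apply MvPolynomial.algHom_ext
    intro i
    rw [AlgHom.comp_apply, aeval_X, AlgHom.coe_id, id_eq]
    by_cases hik : i = k
    · subst hik
      rw [hvfk, hlin, map_add, map_mul, aeval_C, aeval_X, hSu, hufk, algebraMap_eq,
        ← mul_assoc, hCC, one_mul, sub_add_cancel]
    · rw [hvfne i hik, aeval_X, hufne i hik]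
  let e : Spoly (m+1) ≃ₐ[ℂ] Spoly (m+1) := AlgEquiv.ofAlgHom (aeval vf) (aeval uf) hvu huv
  have he : e (X k) = lin a := by
    show aeval vf (X k) = lin a
    rw [aeval_X, hvfk]
  have := (MulEquiv.prime_iff e.toMulEquiv).mpr hXk
  rw [show e.toMulEquiv (X k) = e (X k) from rfl, he] at this
  exact this

lemma sum_mul_single (c : Fin ℓ → ℂ) (k : Fin ℓ) :
    ∑ i, c i * (Pi.single k 1 : Fin ℓ → ℂ) i = c k := by
  rw [Finset.sum_eq_single k]
  · simp
  · intro j _ hjk; simp [Pi.single_apply, hjk]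
  · simp

lemma pairing_apply (a : Fin ℓ → ℂ) (w : GLV ℓ) (v : Fin ℓ → ℂ) :
    ∑ i, a i * w v i = ∑ j, (∑ i, a i * w (Pi.single j 1) i) * v j := by
  have h1 : ∀ i, a i * w v i = ∑ j, a i * (v j * w (Pi.single j 1) i) := by
    intro i
    rw [← Finset.mul_sum, ← apply_eq_sum]
  calc ∑ i, a i * w v i = ∑ i, ∑ j, a i * (v j * w (Pi.single j 1) i) :=
        Finset.sum_congr rfl fun i _ => h1 i
    _ = ∑ j, ∑ i, a i * (v j * w (Pi.single j 1) i) := Finset.sum_comm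
    _ = ∑ j, (∑ i, a i * w (Pi.single j 1) i) * v j := by
        refine Finset.sum_congr rfl fun j _ => ?_
        rw [Finset.sum_mul]
        refine Finset.sum_congr rfl fun i _ => by ring

lemma vanish_on_hypl {a b : Fin ℓ → ℂ} (ha : a ≠ 0)
    (hb : ∀ v ∈ hypl a, ∑ i, b i * v i = 0) : ∃ c : ℂ, b = c • a := by
  obtain ⟨k, hk⟩ : ∃ k, a k ≠ 0 := by
    by_contra h'; push_neg at h'; exact ha (funext h')
  refine ⟨b k / a k, funext fun j => ?_⟩
  have hv : (a k • (Pi.single j 1 : Fin ℓ → ℂ) - a j • (Pi.single k 1 : Fin ℓ → ℂ)) ∈ hypl a := by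
    show ∑ i, a i * _ = 0
    have : ∀ i, a i * ((a k • (Pi.single j 1 : Fin ℓ → ℂ) - a j • (Pi.single k 1 : Fin ℓ → ℂ)) i)
        = a k * (a i * (Pi.single j 1 : Fin ℓ → ℂ) i) - a j * (a i * (Pi.single k 1 : Fin ℓ → ℂ) i) := by
      intro i
      simp [Pi.smul_apply, smul_eq_mul]
      ring
    rw [Finset.sum_congr rfl fun i _ => this i, Finset.sum_sub_distrib, ← Finset.mul_sum,
      ← Finset.mul_sum, sum_mul_single, sum_mul_single]
    ring
  have h0 := hb _ hv
  have h0' : b j * a k - b k * a j = 0 := by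
    have : ∀ i, b i * ((a k • (Pi.single j 1 : Fin ℓ → ℂ) - a j • (Pi.single k 1 : Fin ℓ → ℂ)) i)
        = a k * (b i * (Pi.single j 1 : Fin ℓ → ℂ) i) - a j * (b i * (Pi.single k 1 : Fin ℓ → ℂ) i) := by
      intro i
      simp [Pi.smul_apply, smul_eq_mul]
      ring
    rw [Finset.sum_congr rfl fun i _ => this i, Finset.sum_sub_distrib, ← Finset.mul_sum,
      ← Finset.mul_sum, sum_mul_single, sum_mul_single] at h0
    linear_combination h0
  show b j = b k / a k * a j
  field_simp
  linear_combination h0'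

lemma stab_eigen {a : Fin ℓ → ℂ} (ha : a ≠ 0) (w : GLV ℓ)
    (hw : ∀ v ∈ hypl a, w v = v) :
    ∃ c : ℂ, c ≠ 0 ∧ induced w (lin a) = C c * lin a := by
  set b : Fin ℓ → ℂ := fun j => ∑ i, a i * w (Pi.single j 1) i with hbdef
  have hb : ∀ v ∈ hypl a, ∑ j, b j * v j = 0 := by
    intro v hv
    have h1 : ∑ j, b j * v j = ∑ i, a i * w v i := (pairing_apply a w v).symm
    rw [h1, hw v hv]
    exact hv
  obtain ⟨c, hc⟩ := vanish_on_hypl ha hb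
  refine ⟨c, ?_, ?_⟩
  · rintro rfl
    have hb0 : ∀ m, b m = 0 := by rw [hc]; intro m; simp
    apply ha
    funext j
    have h2 : ∑ i, a i * w (w.symm (Pi.single j 1)) i = 0 := by
      rw [pairing_apply a w (w.symm (Pi.single j 1))]
      have hz : ∀ m : Fin ℓ, (∑ i, a i * w (Pi.single m 1) i) = (0:ℂ) := hb0
      simp only [hz, zero_mul, Finset.sum_const_zero]
    rw [w.apply_symm_apply, sum_mul_single] at h2
    exact h2
  · rw [induced_lin, ← hbdef, hc, lin_smul]

lemma induced_mod {a : Fin ℓ → ℂ} (ha : a ≠ 0) (w : GLV ℓ)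
    (hw : ∀ v ∈ hypl a, w v = v) (q : Spoly ℓ) :
    Ideal.Quotient.mk (Ideal.span ({lin a} : Set (Spoly ℓ))) (induced w q)
      = Ideal.Quotient.mk _ q := by
  set I : Ideal (Spoly ℓ) := Ideal.span ({lin a} : Set (Spoly ℓ)) with hI
  have key : (Ideal.Quotient.mkₐ ℂ I).comp (induced w) = Ideal.Quotient.mkₐ ℂ I := by
    apply MvPolynomial.algHom_ext
    intro i
    rw [AlgHom.comp_apply]
    set b : Fin ℓ → ℂ := fun j => w (Pi.single j 1) i with hbdef
    set d : Fin ℓ → ℂ := fun j => b j - (Pi.single i 1 : Fin ℓ → ℂ) j with hddef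
    have hd : ∀ v ∈ hypl a, ∑ j, d j * v j = 0 := by
      intro v hv
      have h1 : ∑ j, b j * v j = w v i := by
        rw [apply_eq_sum w v i]
        exact Finset.sum_congr rfl fun j _ => mul_comm _ _
      have h2 : ∑ j, (Pi.single i 1 : Fin ℓ → ℂ) j * v j = v i := by
        rw [Finset.sum_eq_single i]
        · simp
        · intro j _ hji; simp [Pi.single_apply, hji]
        · simp
      have h3 : ∀ j, d j * v j = b j * v j - (Pi.single i 1 : Fin ℓ → ℂ) j * v j := by
        intro j; simp [hddef, sub_mul]
      rw [Finset.sum_congr rfl fun j _ => h3 j, Finset.sum_sub_distrib, h1, h2,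
        hw v hv, sub_self]
    obtain ⟨c, hc⟩ := vanish_on_hypl ha hd
    have heqd : induced w (X i) - X i = lin d := by
      rw [induced_X, ← lin_single i, ← lin_sub]
      congr 1
    have hmem : induced w (X i) - X i ∈ I := by
      rw [heqd, hc, lin_smul, hI]
      exact Ideal.mem_span_singleton.mpr ⟨C c, mul_comm _ _⟩
    show Ideal.Quotient.mk I (induced w (X i)) = Ideal.Quotient.mk I (X i)
    exact Ideal.Quotient.eq.mpr hmem
  have := congrArg (fun φ => φ q) key
  simpa using this

lemma mul_apply' (w w' : GLV ℓ) (v : Fin ℓ → ℂ) : (w * w') v = w (w' v) := rfl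

lemma fix_eigen_one {a : Fin ℓ → ℂ} (ha : a ≠ 0) (w : GLV ℓ)
    (hw : ∀ v ∈ hypl a, w v = v) (k : ℕ) (hkpos : 0 < k) (hwk : w ^ k = 1)
    (heig : induced w (lin a) = lin a) : w = 1 := by
  -- from heig, the coefficient vector is preserved
  have hb : (fun j => ∑ i, a i * w (Pi.single j 1) i) = a := by
    have := heig
    rw [induced_lin] at this
    exact lin_inj this
  have hker : ∀ v, w v - v ∈ hypl a := by
    intro v
    show ∑ i, a i * (w v - v) i = 0
    have h1 : ∑ i, a i * (w v - v) i = (∑ i, a i * w v i) - ∑ i, a i * v i := by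
      rw [← Finset.sum_sub_distrib]
      exact Finset.sum_congr rfl fun i _ => by simp [mul_sub]
    rw [h1, pairing_apply a w v]
    have h2 : ∀ j, (∑ i, a i * w (Pi.single j 1) i) = a j := fun j => congrFun hb j
    simp only [h2]
    rw [sub_self]  -- sums equal after mul_comm? terms: a j * v j vs a i * v i: same
  have hN : ∀ v, w (w v - v) = w v - v := fun v => hw _ (hker v)
  have hpow : ∀ m : ℕ, ∀ v, (w ^ m) v = v + (m : ℂ) • (w v - v) := by
    intro m
    induction m with
    | zero => intro v; simp [pow_zero]
    | succ m ih =>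
      intro v
      have hD : w (w v) - w v = w v - v := by
        have h := hN v
        rwa [map_sub] at h
      rw [pow_succ, mul_apply', ih (w v), hD]
      push_cast
      module
  have : ∀ v, w v = v := by
    intro v
    have h := hpow k v
    rw [hwk] at h
    have h1 : v = v + (k : ℂ) • (w v - v) := h
    have h2 : (k : ℂ) • (w v - v) = 0 := by
      have := h1.symm
      rwa [add_eq_left] at this
    have h3 : (k : ℂ) ≠ 0 := Nat.cast_ne_zero.mpr hkpos.ne'
    have := smul_eq_zero.mp h2
    rcases this with h | h
    · exact absurd h h3
    · rw [sub_eq_zero] at h; exact h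
  exact LinearEquiv.toLinearMap_injective (LinearMap.ext this)

lemma toF_C (c : ℂ) : (toF (C c : Spoly ℓ) : Frac ℓ) = algebraMap ℂ (Frac ℓ) c := by
  rw [show (toF : Spoly ℓ →+* Frac ℓ) = algebraMap _ _ from rfl,
    show (C c : Spoly ℓ) = algebraMap ℂ _ c from rfl]
  exact (IsScalarTower.algebraMap_apply ℂ (Spoly ℓ) (Frac ℓ) c).symm

lemma span_lin_prime {a : Fin ℓ → ℂ} (ha : a ≠ 0) :
    (Ideal.span ({lin a} : Set (Spoly ℓ))).IsPrime :=
  (Ideal.span_singleton_prime (lin_ne_zero ha)).mpr (prime_lin ha)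

lemma C_not_dvd {a : Fin ℓ → ℂ} (ha : a ≠ 0) {c : ℂ} (hc : c ≠ 0) :
    ¬ lin a ∣ (C c : Spoly ℓ) := by
  intro hdvd
  have hunit : IsUnit (C c : Spoly ℓ) := by
    refine IsUnit.of_mul_eq_one (C c⁻¹) ?_
    rw [← C_mul, mul_inv_cancel₀ hc, C_1]
  exact (prime_lin ha).not_isUnit (isUnit_of_dvd_unit hdvd hunit)

/-- The core quotient argument: if `C x * σ(g) * f₁ = C y * σ(f₁) * g` with `σ = induced w`,
`w` fixing the hyperplane pointwise, and `lin a ∤ f₁, g`, then `x = y`. -/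
lemma const_eq_of_identity {a : Fin ℓ → ℂ} (ha : a ≠ 0) (w : GLV ℓ)
    (hw : ∀ v ∈ hypl a, w v = v) {f₁ g : Spoly ℓ}
    (hf₁ : ¬ lin a ∣ f₁) (hg : ¬ lin a ∣ g) {x y : ℂ}
    (hid : C x * induced w g * f₁ = C y * induced w f₁ * g) : x = y := by
  set I : Ideal (Spoly ℓ) := Ideal.span ({lin a} : Set (Spoly ℓ)) with hI
  haveI : I.IsPrime := span_lin_prime ha
  set π : Spoly ℓ →+* Spoly ℓ ⧸ I := Ideal.Quotient.mk I with hπ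
  have hπg : π g ≠ 0 := by
    rw [hπ, Ne, Ideal.Quotient.eq_zero_iff_mem, hI, Ideal.mem_span_singleton]
    exact hg
  have hπf : π f₁ ≠ 0 := by
    rw [hπ, Ne, Ideal.Quotient.eq_zero_iff_mem, hI, Ideal.mem_span_singleton]
    exact hf₁
  have h1 : π (C x) * π g * π f₁ = π (C y) * π f₁ * π g := by
    have := congrArg π hid
    rw [map_mul, map_mul, map_mul, map_mul] at this
    rwa [show π (induced w g) = π g from induced_mod ha w hw g,
      show π (induced w f₁) = π f₁ from induced_mod ha w hw f₁] at this
  have h2 : (π (C x) - π (C y)) * (π g * π f₁) = 0 := by ring_nf; linear_combination h1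
  have h3 : π (C x) - π (C y) = 0 := by
    rcases mul_eq_zero.mp h2 with h | h
    · exact h
    · rcases mul_eq_zero.mp h with h' | h'
      · exact absurd h' hπg
      · exact absurd h' hπf
  have h4 : π (C (x - y)) = 0 := by
    have : (C (x - y) : Spoly ℓ) = C x - C y := by rw [map_sub]
    rw [this, map_sub]
    exact h3
  by_contra hxy
  have : ¬ lin a ∣ C (x - y) := C_not_dvd ha (sub_ne_zero.mpr hxy)
  rw [hπ, Ideal.Quotient.eq_zero_iff_mem, hI, Ideal.mem_span_singleton] at h4
  exact this h4

def stabSub (G : Subgroup (GLV ℓ)) (a : Fin ℓ → ℂ) : Subgroup (GLV ℓ) where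
  carrier := {w | w ∈ G ∧ ∀ v ∈ hypl a, w v = v}
  one_mem' := ⟨G.one_mem, fun v _ => rfl⟩
  mul_mem' := by
    rintro x y ⟨hxG, hx⟩ ⟨hyG, hy⟩
    exact ⟨G.mul_mem hxG hyG, fun v hv => by rw [mul_apply', hy v hv, hx v hv]⟩
  inv_mem' := by
    rintro x ⟨hxG, hx⟩
    refine ⟨G.inv_mem hxG, fun v hv => ?_⟩
    calc x⁻¹ v = x⁻¹ (x v) := by rw [hx v hv]
    _ = (x⁻¹ * x) v := rfl
    _ = v := by rw [inv_mul_cancel]; rfl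

lemma mem_stabSub {G : Subgroup (GLV ℓ)} {a : Fin ℓ → ℂ} {w : GLV ℓ} :
    w ∈ stabSub G a ↔ w ∈ G ∧ ∀ v ∈ hypl a, w v = v := Iff.rfl

instance stabSub_finite (G : Subgroup (GLV ℓ)) [Finite G] (a : Fin ℓ → ℂ) :
    Finite (stabSub G a) := by
  apply Finite.of_injective (fun x : stabSub G a => (⟨x.1, x.2.1⟩ : G))
  intro x y hxy
  have : (⟨x.1, x.2.1⟩ : G).val = (⟨y.1, y.2.1⟩ : G).val := congrArg Subtype.val hxy
  exact Subtype.ext this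

lemma hypOrder_eq_card (G : Subgroup (GLV ℓ)) (a : Fin ℓ → ℂ) :
    hypOrder G a = Nat.card (stabSub G a) := by
  apply Nat.card_congr
  exact {
    toFun := fun x => ⟨(x.1 : GLV ℓ), x.1.2, x.2⟩
    invFun := fun y => ⟨⟨(y.1 : GLV ℓ), y.2.1⟩, y.2.2⟩
    left_inv := fun x => rfl
    right_inv := fun y => rfl }

lemma exists_chi {a : Fin ℓ → ℂ} (ha : a ≠ 0) (G : Subgroup (GLV ℓ)) [Finite G] :
    ∃ χ : stabSub G a →* ℂˣ, Function.Injective χ ∧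
      ∀ w : stabSub G a, induced (w : GLV ℓ) (lin a) = C ((χ w : ℂˣ) : ℂ) * lin a := by
  have hex : ∀ w : stabSub G a, ∃ c : ℂˣ, induced (w : GLV ℓ) (lin a) = C (c : ℂ) * lin a := by
    intro w
    obtain ⟨c, hc0, hc⟩ := stab_eigen ha (w : GLV ℓ) w.2.2
    exact ⟨Units.mk0 c hc0, hc⟩
  choose c hc using hex
  have huniq : ∀ x y : ℂ, C x * lin a = C y * lin a → x = y := by
    intro x y h
    exact C_injective (Fin ℓ) ℂ (mul_right_cancel₀ (lin_ne_zero ha) h)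
  have hmul : ∀ x y : stabSub G a, c (x * y) = c x * c y := by
    intro x y
    apply Units.ext
    apply huniq _ _ ?_
    rw [← hc (x * y)]
    have hcoe : ((x * y : stabSub G a) : GLV ℓ) = (x : GLV ℓ) * (y : GLV ℓ) := rfl
    have hCC : induced (y : GLV ℓ) (C ((c x : ℂˣ) : ℂ)) = C ((c x : ℂˣ) : ℂ) := by
      show aeval _ (C _) = _
      rw [aeval_C, algebraMap_eq]
    rw [hcoe, induced_mul, hc x, map_mul, hCC, hc y, Units.val_mul, C_mul]
    ring
  set χ : stabSub G a →* ℂˣ := MonoidHom.mk' c hmul with hχ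
  refine ⟨χ, ?_, fun w => hc w⟩
  rw [injective_iff_map_eq_one]
  intro w hw1
  have h1 : induced (w : GLV ℓ) (lin a) = lin a := by
    have hw1' : c w = 1 := hw1
    rw [hc w, hw1', Units.val_one, C_1, one_mul]
  have hk : 0 < orderOf w := orderOf_pos w
  have hwk : ((w : GLV ℓ)) ^ (orderOf w) = 1 := by
    have : ((w ^ orderOf w : stabSub G a) : GLV ℓ) = ((1 : stabSub G a) : GLV ℓ) := by
      rw [pow_orderOf_eq_one]
    rwa [SubgroupClass.coe_pow] at this
  have := fix_eigen_one ha (w : GLV ℓ) w.2.2 (orderOf w) hk hwk h1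
  exact Subtype.ext this

lemma hypOrder_dvd {a : Fin ℓ → ℂ} (ha : a ≠ 0) (G : Subgroup (GLV ℓ)) [Finite G] (n : ℤ)
    (h : ∀ w : GLV ℓ, w ∈ G → (∀ v ∈ hypl a, w v = v) →
      ∀ c : ℂ, c ≠ 0 → induced w (lin a) = C c * lin a → c ^ (n : ℤ) = 1) :
    (hypOrder G a : ℤ) ∣ n := by
  obtain ⟨χ, hinj, hχ⟩ := exists_chi ha G
  haveI : Finite χ.range := by
    have : Finite (Set.range χ) := Set.finite_range χ
    exact this
  obtain ⟨ζ, hζ⟩ := IsCyclic.exists_generator (α := χ.range)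
  have hord : orderOf ζ = hypOrder G a := by
    rw [orderOf_eq_card_of_forall_mem_zpowers hζ, hypOrder_eq_card]
    refine (Nat.card_congr ?_).symm
    exact (MonoidHom.ofInjective hinj).toEquiv
  obtain ⟨w, hw⟩ := ζ.2
  have hc0 : ((χ w : ℂˣ) : ℂ) ≠ 0 := Units.ne_zero _
  have h1 : ((χ w : ℂˣ) : ℂ) ^ (n : ℤ) = 1 :=
    h (w : GLV ℓ) w.2.1 w.2.2 _ hc0 (hχ w)
  have h2 : (χ w : ℂˣ) ^ (n : ℤ) = 1 := by
    apply Units.ext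
    rw [Units.val_zpow_eq_zpow_val, Units.val_one]
    exact h1
  have h3 : ζ ^ (n : ℤ) = 1 := by
    apply Subtype.ext
    rw [SubgroupClass.coe_zpow]
    rw [hw] at h2
    exact h2
  rw [← hord]
  exact orderOf_dvd_iff_zpow_eq_one.mpr h3

lemma toF_ne_zero {p : Spoly ℓ} (hp : p ≠ 0) : (toF p : Frac ℓ) ≠ 0 := by
  intro h
  exact hp (toF_injective (by rw [h, map_zero]))

/-- Main step for the hard direction. -/
lemma key_step {ℓ : ℕ} (G : Subgroup (GLV ℓ)) [Finite G] {a : Fin ℓ → ℂ} (ha0 : a ≠ 0)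
    (θ : Derivation ℂ (Frac ℓ) (Frac ℓ))
    (hW : ∀ w ∈ G, ∀ p f g : Spoly ℓ, g ≠ 0 → toF g * θ (toF p) = toF f →
      toF (induced w g) * θ (toF (induced w p)) = toF (induced w f))
    {νa μa : ℤ} (hμa : ∃ b : ℤ, μa = b * (hypOrder G a : ℤ) + 1)
    (hlt : μa - (hypOrder G a : ℤ) < νa)
    (hmult : ∃ y ∈ locAt (lin a), θ (toF (lin a)) = toF (lin a) ^ νa * y) :
    ∃ y ∈ locAt (lin a), θ (toF (lin a)) = toF (lin a) ^ μa * y := by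
  set α := lin a with hαdef
  have hα0 : α ≠ 0 := lin_ne_zero ha0
  have hαF : (toF α : Frac ℓ) ≠ 0 := toF_ne_zero hα0
  obtain ⟨y, ⟨f, g, hgspan, hgy⟩, ht⟩ := hmult
  set T := θ (toF α) with hTdef
  by_cases ht0 : T = 0
  · refine ⟨0, ⟨0, 1, ?_, by simp⟩, by rw [ht0, mul_zero]⟩
    intro hmem
    exact (span_lin_prime ha0).ne_top ((Ideal.eq_top_iff_one _).mpr hmem)
  have hg0 : g ≠ 0 := fun h => hgspan (h ▸ Ideal.zero_mem _)
  have hgF : (toF g : Frac ℓ) ≠ 0 := toF_ne_zero hg0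
  have hy0 : y ≠ 0 := fun h => ht0 (by rw [ht, h, mul_zero])
  have hf0 : f ≠ 0 := by
    intro h
    apply hy0
    have h2 : toF g * y = 0 := by rw [hgy, h, map_zero]
    rcases mul_eq_zero.mp h2 with h' | h'
    · exact absurd h' hgF
    · exact h'
  obtain ⟨m, f₁, hndvd, hfeq⟩ := WfDvdMonoid.max_power_factor hf0 (prime_lin ha0).irreducible
  have hgndvd : ¬ α ∣ g := fun hd => hgspan (Ideal.mem_span_singleton.mpr hd)
  have hf₁F : (toF f₁ : Frac ℓ) ≠ 0 := toF_ne_zero (fun h => hndvd (h ▸ dvd_zero _))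
  set n : ℤ := νa + m with hn
  have hrel : toF g * T = toF α ^ n * toF f₁ := by
    calc toF g * T = toF α ^ νa * (toF g * y) := by rw [ht]; ring
      _ = toF α ^ νa * toF f := by rw [hgy]
      _ = toF α ^ νa * (toF α ^ (m : ℤ) * toF f₁) := by
          rw [hfeq, map_mul, map_pow, zpow_natCast]
      _ = toF α ^ n * toF f₁ := by rw [hn, zpow_add₀ hαF]; ring
  set e : ℕ := hypOrder G a with he
  have hepos : 0 < e := by
    rw [he, hypOrder_eq_card]
    haveI : Nonempty (stabSub G a) := ⟨1⟩
    exact Nat.card_pos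
  -- the invariance argument: e ∣ n - 1
  have hdvd : (e : ℤ) ∣ n - 1 := by
    apply hypOrder_dvd ha0 G (n - 1)
    intro w hwG hwfix c hc0 hceig
    set r : ℕ := n.toNat with hr
    set s : ℕ := (-n).toNat with hs
    have hrs : (r : ℤ) - (s : ℤ) = n := by omega
    have h3 : toF α ^ s * (toF g * T) = toF α ^ r * toF f₁ := by
      rw [hrel, ← zpow_natCast (toF α) s, ← zpow_natCast (toF α) r, ← mul_assoc,
        ← zpow_add₀ hαF]
      congr 2
      omega
    have hsg0 : α ^ s * g ≠ 0 := mul_ne_zero (pow_ne_zero _ hα0) hg0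
    have hrel2 : toF (α ^ s * g) * θ (toF α) = toF (α ^ r * f₁) := by
      rw [map_mul, map_pow, map_mul, map_pow, ← hTdef]
      calc toF α ^ s * toF g * T = toF α ^ s * (toF g * T) := by ring
        _ = toF α ^ r * toF f₁ := h3
    have hW' := hW w hwG α (α ^ r * f₁) (α ^ s * g) hsg0 hrel2
    rw [hceig] at hW'
    have hθC : θ (toF (C c * α)) = toF (C c) * T := by
      rw [map_mul, Derivation.leibniz, toF_C, Derivation.map_algebraMap, smul_zero,
        add_zero, smul_eq_mul, ← toF_C, ← hTdef]
    rw [hθC] at hW'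
    have hσs : induced w (α ^ s * g) = C c ^ s * α ^ s * induced w g := by
      rw [map_mul, map_pow, hceig, mul_pow]
    have hσr : induced w (α ^ r * f₁) = C c ^ r * α ^ r * induced w f₁ := by
      rw [map_mul, map_pow, hceig, mul_pow]
    rw [hσs, hσr] at hW'
    have hfinal : toF (C c ^ (s+1) * α ^ r * (induced w g * f₁)) =
        toF (C c ^ r * α ^ r * (induced w f₁ * g)) := by
      simp only [map_mul, map_pow] at hW' ⊢
      linear_combination toF g * hW' - toF (C c) ^ (s+1) * toF (induced w g) * h3
    have hpoly := toF_injective hfinal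
    have hid' : α ^ r * (C (c ^ (s+1)) * induced w g * f₁) =
        α ^ r * (C (c ^ r) * induced w f₁ * g) := by
      rw [C_pow, C_pow]
      linear_combination hpoly
    have hid := mul_left_cancel₀ (pow_ne_zero r hα0) hid'
    have hxy : c ^ (s+1) = c ^ r := const_eq_of_identity ha0 w hwfix hndvd hgndvd hid
    have hpowz : c ^ ((s : ℤ) + 1) = c ^ (r : ℤ) := by
      rw [show ((s:ℤ)+1) = ((s+1 : ℕ) : ℤ) by push_cast; ring, zpow_natCast, zpow_natCast, hxy]
    calc c ^ (n - 1) = c ^ ((r : ℤ) - ((s : ℤ) + 1)) := by rw [show n - 1 = (r:ℤ) - ((s:ℤ)+1) by omega]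
      _ = 1 := by
          rw [zpow_sub₀ hc0, ← hpowz, div_self (zpow_ne_zero _ hc0)]
  -- arithmetic
  have hnν : νa ≤ n := by rw [hn]; omega
  have hnμ : μa ≤ n := by
    obtain ⟨b, hb⟩ := hμa
    have h2 : (e : ℤ) ∣ μa - 1 := ⟨b, by rw [hb, he]; ring⟩
    obtain ⟨t, ht2⟩ := dvd_sub hdvd h2
    have h4 : (n - 1) - (μa - 1) = n - μa := by ring
    rw [h4] at ht2
    have h5 : (e : ℤ) * (-1) < e * t := by
      rw [← ht2]
      have : μa - e < n := lt_of_lt_of_le hlt hnν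
      linarith
    have h6 : (-1 : ℤ) < t := lt_of_mul_lt_mul_left h5 (by positivity)
    have h7 : 0 ≤ t := by omega
    nlinarith [ht2]
  -- conclude
  have hd0 : (0:ℤ) ≤ n - μa := by linarith
  refine ⟨toF α ^ (n - μa) * (toF f₁ * (toF g)⁻¹),
    ⟨α ^ (n - μa).toNat * f₁, g, hgspan, ?_⟩, ?_⟩
  · have hcast : toF (α ^ (n - μa).toNat * f₁) = toF α ^ (n - μa) * toF f₁ := by
      rw [map_mul, map_pow, ← zpow_natCast (toF α), Int.toNat_of_nonneg hd0]
    rw [hcast]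
    field_simp
  · apply mul_left_cancel₀ hgF
    rw [hrel]
    rw [show toF α ^ μa * (toF α ^ (n - μa) * (toF f₁ * (toF g)⁻¹))
        = toF α ^ μa * toF α ^ (n - μa) * toF f₁ * (toF g)⁻¹ by ring,
      ← zpow_add₀ hαF]
    rw [show μa + (n - μa) = n by ring]
    field_simp

lemma easy_step {ℓ : ℕ} {a : Fin ℓ → ℂ} (ha0 : a ≠ 0) (θ : Derivation ℂ (Frac ℓ) (Frac ℓ))
    {νa μa : ℤ} (hle : νa ≤ μa)
    (hmult : ∃ y ∈ locAt (lin a), θ (toF (lin a)) = toF (lin a) ^ μa * y) :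
    ∃ y ∈ locAt (lin a), θ (toF (lin a)) = toF (lin a) ^ νa * y := by
  obtain ⟨y, ⟨f, g, hgspan, hgy⟩, ht⟩ := hmult
  have hαF := toF_ne_zero (lin_ne_zero ha0)
  refine ⟨toF (lin a) ^ (μa - νa) * y, ⟨lin a ^ (μa - νa).toNat * f, g, hgspan, ?_⟩, ?_⟩
  · have hcast : toF (lin a ^ (μa - νa).toNat * f) = toF (lin a) ^ (μa - νa) * toF f := by
      rw [map_mul, map_pow, ← zpow_natCast (toF (lin a)), Int.toNat_of_nonneg (by omega)]
    rw [hcast, ← hgy]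
    ring
  · rw [ht, ← mul_assoc, ← zpow_add₀ hαF]
    rw [show νa + (μa - νa) = μa by ring]

/-- Let `ν` be any ℤ-valued multiplicity on the reflection arrangement `𝒜(W)` of a
well-generated irreducible unitary reflection group. For each `H` choose `a_H ∈ ℤ`
and set `μ(H) = a_H·e_H + 1`; if `μ − ω < ν ≤ μ` pointwise, then
`D(𝒜, ν)^W = D(𝒜, μ)^W`. -/
theorem invariant_parts_eq_general {ℓ : ℕ} (hℓ : 0 < ℓ) (G : Subgroup (GLV ℓ)) [Finite G]
    (A : Finset (Fin ℓ → ℂ)) (hGA : IsReflArrOf G A)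
    (hwg : WellGen G) (hirr : IsIrred G)
    (ν μ : (Fin ℓ → ℂ) → ℤ) (aH : (Fin ℓ → ℂ) → ℤ)
    (hμ : ∀ a ∈ A, μ a = aH a * (hypOrder G a : ℤ) + 1)
    (hlt : ∀ a ∈ A, μ a - (hypOrder G a : ℤ) < ν a)
    (hle : ∀ a ∈ A, ν a ≤ μ a) :
    {θ : Derivation ℂ (Frac ℓ) (Frac ℓ) | Dmult A ν θ ∧ Winvariant G θ} =
      {θ | Dmult A μ θ ∧ Winvariant G θ} := by
  ext θ
  simp only [Set.mem_setOf_eq]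
  constructor
  · rintro ⟨⟨hinf, hmult⟩, hWi⟩
    refine ⟨⟨hinf, fun a haA => ?_⟩, hWi⟩
    exact key_step G (hGA.1.1 a haA) θ hWi ⟨aH a, hμ a haA⟩ (hlt a haA) (hmult a haA)
  · rintro ⟨⟨hinf, hmult⟩, hWi⟩
    refine ⟨⟨hinf, fun a haA => ?_⟩, hWi⟩
    exact easy_step (hGA.1.1 a haA) θ (hle a haA) (hmult a haA)
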